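/- In Setup A, assume additionally that Σ_{k=1}^{n'} a_k/r_k ≥ 1/r_{n+1}. Let S, S' ⊆ {1,…,n} be subsets containing {1,…,n'}, with integer families t = (t_i)_{i∈S} and t' = (t'_i)_{i∈S'}. If U(S,t) is not contained in U(S',t'), then F(S,t) is not contained in F(S',t'), and the set difference F(S,t) ∖ F(S',t'), equipped with the subspace topology from ℝⁿ, is a contractible topological space. -/

import Mathlib

open scoped RealInnerProductSpace BigOperators

noncomputable section

/-- Euclidean space `ℝⁿ` with the standard inner product. -/
abbrev E (n : ℕ) : Type := EuclideanSpace ℝ (Fin n)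

/-- The index set `I' = {1,…,n'}` inside `{1,…,n}`. -/
def IprimeA (n n' : ℕ) : Finset (Fin n) := Finset.univ.filter fun i => i.val < n'

/-- `v_{n+1} := a₁ v₁ + ⋯ + a_{n'} v_{n'}`. -/
def vLast (n n' : ℕ) (a : Fin n → ℚ) (v : Fin n → E n) : E n :=
  ∑ i ∈ IprimeA n n', (a i : ℝ) • v i

/-- `U(S,t) := {x ∈ ℝⁿ : ⟨x, v_i⟩ > t_i/r_i for all i ∈ S}`. -/
def USet (n : ℕ) (v : Fin n → E n) (r : Fin n → ℤ) (S : Finset (Fin n))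
    (t : Fin n → ℤ) : Set (E n) :=
  {x | ∀ i ∈ S, ((t i : ℝ) / (r i : ℝ)) < ⟪x, v i⟫}

/-- `t_{n+1}(t) := ⌈r_{n+1} · Σ_{k=1}^{n'} a_k t_k / r_k⌉`. -/
def tLast (n n' : ℕ) (a : Fin n → ℚ) (r : Fin n → ℤ) (rl : ℤ) (t : Fin n → ℤ) : ℤ :=
  ⌈(rl : ℚ) * ∑ k ∈ IprimeA n n', a k * (t k : ℚ) / (r k : ℚ)⌉

/-- `F(S,t) := {x ∈ U(S,t) : ⟨x, v_{n+1}⟩ > t_{n+1}(t)/r_{n+1}}`. -/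
def FSetA (n n' : ℕ) (a : Fin n → ℚ) (v : Fin n → E n) (r : Fin n → ℤ) (rl : ℤ)
    (S : Finset (Fin n)) (t : Fin n → ℤ) : Set (E n) :=
  {x | x ∈ USet n v r S t ∧
    ((tLast n n' a r rl t : ℝ) / (rl : ℝ)) < ⟪x, vLast n n' a v⟫}


lemma exists_inner {n : ℕ} (v : Fin n → E n) (hv : LinearIndependent ℝ v) (c : Fin n → ℝ) :
    ∃ x : E n, ∀ i, ⟪x, v i⟫ = c i := by
  let T : E n →ₗ[ℝ] (Fin n → ℝ) := LinearMap.pi fun i => ((innerSL ℝ (v i)).toLinearMap)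
  have hspan : Submodule.span ℝ (Set.range v) = ⊤ := by
    apply Submodule.eq_top_of_finrank_eq
    rw [finrank_span_eq_card hv]
    simp
  have hinj : Function.Injective T := by
    rw [← LinearMap.ker_eq_bot, Submodule.eq_bot_iff]
    intro x hx
    have h0 : ∀ i, ⟪v i, x⟫ = 0 := fun i => congrFun hx i
    have hx0 : ⟪x, x⟫ = 0 := by
      have hxmem : x ∈ Submodule.span ℝ (Set.range v) := hspan ▸ Submodule.mem_top
      refine Submodule.span_induction (p := fun y _ => ⟪y, x⟫ = 0) ?_ ?_ ?_ ?_ hxmem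
      · rintro y ⟨i, rfl⟩; exact h0 i
      · simp
      · intro y z _ _ hy hz; rw [inner_add_left, hy, hz, add_zero]
      · intro c y _ hy; rw [real_inner_smul_left, hy, mul_zero]
    exact inner_self_eq_zero.mp hx0
  have hsurj : Function.Surjective T :=
    (LinearMap.injective_iff_surjective_of_finrank_eq_finrank (by simp)).mp hinj
  obtain ⟨x, hx⟩ := hsurj c
  exact ⟨x, fun i => by rw [real_inner_comm]; exact congrFun hx i⟩

lemma combo_gt {c c1 c2 as bs : ℝ} (h1 : c < c1) (h2 : c < c2) (hab : as + bs = 1)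
    (has : 0 ≤ as) (hbs : 0 ≤ bs) : c < as*c1 + bs*c2 := by
  rcases eq_or_lt_of_le has with h | h
  · have hbs1 : bs = 1 := by linarith
    rw [← h, hbs1]; ring_nf; linarith
  · have h3 : as*c + bs*c = c := by rw [← add_mul, hab, one_mul]
    nlinarith [mul_pos h (sub_pos.mpr h1), mul_nonneg hbs (sub_pos.mpr h2).le]

lemma combo_le {c c1 c2 as bs : ℝ} (h1 : c1 ≤ c) (h2 : c2 ≤ c) (hab : as + bs = 1)
    (has : 0 ≤ as) (hbs : 0 ≤ bs) : as*c1 + bs*c2 ≤ c := by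
  have h3 : as*c + bs*c = c := by rw [← add_mul, hab, one_mul]
  nlinarith [mul_le_mul_of_nonneg_left h1 has, mul_le_mul_of_nonneg_left h2 hbs]

lemma tLast_bounds (n n' : ℕ) (a : Fin n → ℚ) (r : Fin n → ℤ) (rl : ℤ) (t : Fin n → ℤ)
    (hrl : 0 < rl) :
    (∑ j ∈ IprimeA n n', (a j : ℝ) * ((t j : ℝ) / (r j : ℝ))) ≤ (tLast n n' a r rl t : ℝ) / (rl : ℝ) ∧
    (tLast n n' a r rl t : ℝ) / (rl : ℝ) <
      (∑ j ∈ IprimeA n n', (a j : ℝ) * ((t j : ℝ) / (r j : ℝ))) + 1 / (rl : ℝ) := by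
  set q : ℚ := ∑ k ∈ IprimeA n n', a k * (t k : ℚ) / (r k : ℚ) with hq
  have hrlQ : (0:ℚ) < (rl:ℚ) := by exact_mod_cast hrl
  have h1 : q ≤ (tLast n n' a r rl t : ℚ) / (rl:ℚ) := by
    rw [le_div_iff₀ hrlQ, mul_comm]
    exact Int.le_ceil _
  have h2 : (tLast n n' a r rl t : ℚ) / (rl:ℚ) < q + 1/(rl:ℚ) := by
    rw [div_lt_iff₀ hrlQ, add_mul, div_mul_cancel₀ _ (ne_of_gt hrlQ), mul_comm q]
    exact_mod_cast Int.ceil_lt_add_one _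
  have hcast : ((q:ℚ):ℝ) = ∑ j ∈ IprimeA n n', (a j : ℝ) * ((t j : ℝ) / (r j : ℝ)) := by
    rw [hq]; push_cast [div_eq_mul_inv]; exact Finset.sum_congr rfl fun x _ => by ring
  constructor
  · have := (Rat.cast_le (K := ℝ)).mpr h1
    push_cast at this ⊢
    rw [← hcast]; push_cast; linarith
  · have := (Rat.cast_lt (K := ℝ)).mpr h2
    push_cast at this ⊢
    rw [← hcast]; push_cast; linarith

lemma exists_P (n n' : ℕ) (hn'1 : 1 ≤ n') (hn'n : n' ≤ n)
    (a : Fin n → ℚ) (ha : ∀ i : Fin n, i.val < n' → 0 < a i)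
    (r : Fin n → ℤ) (hr : ∀ i, 0 < r i) (rl : ℤ) (hrl : 0 < rl)
    (hsum : (1 : ℚ) / (rl : ℚ) ≤ ∑ k ∈ IprimeA n n', a k / (r k : ℚ))
    (S S' : Finset (Fin n)) (hS : IprimeA n n' ⊆ S) (hS' : IprimeA n n' ⊆ S')
    (t t' : Fin n → ℤ) :
    ∃ P : Fin n → ℝ,
      (∀ j ∈ S, (t j : ℝ) / (r j : ℝ) < P j) ∧
      (∀ j ∈ S', (j ∉ S ∨ (t j : ℝ) / (r j : ℝ) < (t' j : ℝ) / (r j : ℝ)) →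
        P j ≤ (t' j : ℝ) / (r j : ℝ)) ∧
      ((tLast n n' a r rl t : ℝ) / (rl : ℝ) < ∑ j ∈ IprimeA n n', (a j : ℝ) * P j) ∧
      ((tLast n n' a r rl t : ℝ) / (rl : ℝ) < (tLast n n' a r rl t' : ℝ) / (rl : ℝ) →
        ∑ j ∈ IprimeA n n', (a j : ℝ) * P j ≤ (tLast n n' a r rl t' : ℝ) / (rl : ℝ)) := by
  classical
  set I := IprimeA n n' with hI
  set τ : Fin n → ℝ := fun j => (t j : ℝ) / (r j : ℝ) with hτ
  set τ' : Fin n → ℝ := fun j => (t' j : ℝ) / (r j : ℝ) with hτ'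
  set σ : ℝ := (tLast n n' a r rl t : ℝ) / (rl : ℝ) with hσ
  set σ' : ℝ := (tLast n n' a r rl t' : ℝ) / (rl : ℝ) with hσ'
  have hmemI : ∀ j : Fin n, j ∈ I ↔ j.val < n' := by
    intro j; simp [hI, IprimeA]
  have hrR : ∀ j, (0:ℝ) < (r j : ℝ) := fun j => by exact_mod_cast hr j
  have haR : ∀ j ∈ I, (0:ℝ) < (a j : ℝ) := fun j hj => by
    exact_mod_cast ha j ((hmemI j).mp hj)
  have hK1 : ∑ j ∈ I, (a j:ℝ) * τ j ≤ σ := (tLast_bounds n n' a r rl t hrl).1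
  have hK1' : ∑ j ∈ I, (a j:ℝ) * τ' j ≤ σ' := (tLast_bounds n n' a r rl t' hrl).1
  have hsumR : 1 / (rl:ℝ) ≤ ∑ k ∈ I, (a k:ℝ) / (r k:ℝ) := by
    have := (Rat.cast_le (K := ℝ)).mpr hsum
    push_cast at this; convert this using 2 <;> push_cast <;> ring
  have hK2 : σ < ∑ j ∈ I, (a j:ℝ) * τ j + ∑ j ∈ I, (a j:ℝ) / (r j:ℝ) := by
    have h := (tLast_bounds n n' a r rl t hrl).2
    calc σ < ∑ j ∈ I, (a j:ℝ) * τ j + 1/(rl:ℝ) := h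
      _ ≤ _ := by linarith
  have hgap : ∀ j ∈ I, τ j < τ' j → τ j + 1/(r j:ℝ) ≤ τ' j := by
    intro j _ hlt
    have htt : (t j : ℝ) < (t' j : ℝ) := by
      have := (div_lt_div_iff_of_pos_right (hrR j)).mp hlt
      exact this
    have htt2 : t j < t' j := by exact_mod_cast htt
    have h1 : (t j : ℝ) + 1 ≤ (t' j : ℝ) := by exact_mod_cast htt2
    have he : τ j + 1/(r j:ℝ) = ((t j:ℝ)+1)/(r j:ℝ) := by
      rw [hτ]; ring
    rw [he]
    show ((t j:ℝ)+1)/(r j:ℝ) ≤ (t' j:ℝ)/(r j:ℝ)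
    gcongr
    exact le_of_lt (hrR j)
  by_cases hA : ∀ j ∈ I, τ j < τ' j
  · -- Case A: all coordinates in I' are "violable"
    refine ⟨fun j => if j ∈ S' ∧ (j ∉ S ∨ τ j < τ' j) then τ' j else τ j + 1, ?_, ?_, ?_, ?_⟩
    · intro j hjS
      by_cases hc : j ∈ S' ∧ (j ∉ S ∨ τ j < τ' j)
      · simp only [hc, if_true]
        rcases hc.2 with h | h
        · exact absurd hjS h
        · exact h
      · simp only [hc, if_false]; linarith
    · intro j hjS' hpred
      exact le_of_eq (if_pos (⟨hjS', hpred⟩ : j ∈ S' ∧ (j ∉ S ∨ τ j < τ' j)))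
    · have hLP : ∑ j ∈ I, (a j:ℝ) * (if j ∈ S' ∧ (j ∉ S ∨ τ j < τ' j) then τ' j else τ j + 1)
          = ∑ j ∈ I, (a j:ℝ) * τ' j := by
        refine Finset.sum_congr rfl fun j hj => ?_
        have : j ∈ S' ∧ (j ∉ S ∨ τ j < τ' j) := ⟨hS' hj, Or.inr (hA j hj)⟩
        simp [this]
      rw [hLP]
      have hle : ∑ j ∈ I, ((a j:ℝ) * τ j + (a j:ℝ) / (r j:ℝ)) ≤ ∑ j ∈ I, (a j:ℝ) * τ' j := by
        refine Finset.sum_le_sum fun j hj => ?_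
        have h1 := hgap j hj (hA j hj)
        have h2 := haR j hj
        have : (a j:ℝ) * τ j + (a j:ℝ) / (r j:ℝ) = (a j:ℝ) * (τ j + 1/(r j:ℝ)) := by ring
        rw [this]
        exact mul_le_mul_of_nonneg_left h1 (le_of_lt h2)
      rw [Finset.sum_add_distrib] at hle
      linarith
    · intro _
      have hLP : ∑ j ∈ I, (a j:ℝ) * (if j ∈ S' ∧ (j ∉ S ∨ τ j < τ' j) then τ' j else τ j + 1)
          = ∑ j ∈ I, (a j:ℝ) * τ' j := by
        refine Finset.sum_congr rfl fun j hj => ?_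
        have : j ∈ S' ∧ (j ∉ S ∨ τ j < τ' j) := ⟨hS' hj, Or.inr (hA j hj)⟩
        simp [this]
      rw [hLP]
      exact hK1'
  · -- Case B
    push_neg at hA
    obtain ⟨j₀, hj₀I, hj₀⟩ := hA
    have ha₀ : (0:ℝ) < (a j₀:ℝ) := haR j₀ hj₀I
    set T : ℝ := if σ < σ' then σ' else σ + 1 with hT
    have hσT : σ < T := by
      rw [hT]; split
      · assumption
      · linarith
    set δ : Fin n → ℝ := fun j => if τ j < τ' j then min (τ' j - τ j) 1 else 1 with hδ
    have hδpos : ∀ j, 0 < δ j := by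
      intro j; rw [hδ]; dsimp only; split
      · exact lt_min (by linarith) one_pos
      · exact one_pos
    have hδle : ∀ j, τ j < τ' j → δ j ≤ τ' j - τ j := by
      intro j hlt; rw [hδ]; dsimp only; rw [if_pos hlt]; exact min_le_left _ _
    have hδ1 : ∀ j, δ j ≤ 1 := by
      intro j; rw [hδ]; dsimp only; split
      · exact min_le_right _ _
      · exact le_refl 1
    set C : ℝ := ∑ j ∈ I.erase j₀, (a j:ℝ) * δ j with hC
    have hC0 : 0 ≤ C := Finset.sum_nonneg fun j hj =>
      mul_nonneg (le_of_lt (haR j (Finset.mem_of_mem_erase hj))) (le_of_lt (hδpos j))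
    set G : ℝ := T - ∑ j ∈ I, (a j:ℝ) * τ j with hG
    have hG0 : 0 < G := by rw [hG]; linarith
    set s : ℝ := min 1 (G / (2*(C+1))) with hs
    have hs0 : 0 < s := lt_min one_pos (div_pos hG0 (by linarith))
    have hs1 : s ≤ 1 := min_le_left _ _
    have hsC : s * C < G := by
      have h1 : s ≤ G / (2*(C+1)) := min_le_right _ _
      have h2 : s * C ≤ G / (2*(C+1)) * C := mul_le_mul_of_nonneg_right h1 hC0
      have h3 : G / (2*(C+1)) * C < G := by
        rw [div_mul_eq_mul_div, div_lt_iff₀ (by linarith)]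
        nlinarith
      linarith
    set Pb : Fin n → ℝ := fun j =>
      if j = j₀ then (T - ∑ k ∈ I.erase j₀, (a k:ℝ)*(τ k + s*δ k))/(a j₀:ℝ)
      else if j ∈ I then τ j + s*δ j
      else if j ∈ S' ∧ (j ∉ S ∨ τ j < τ' j) then τ' j else τ j + 1 with hPb
    have herase : ∑ k ∈ I.erase j₀, (a k:ℝ)*(τ k + s*δ k)
        = (∑ k ∈ I.erase j₀, (a k:ℝ)*τ k) + s*C := by
      rw [hC, Finset.mul_sum, ← Finset.sum_add_distrib]
      exact Finset.sum_congr rfl fun k _ => by ring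
    have hsplitτ : ∑ j ∈ I, (a j:ℝ) * τ j
        = (a j₀:ℝ) * τ j₀ + ∑ k ∈ I.erase j₀, (a k:ℝ)*τ k :=
      (Finset.add_sum_erase I (fun j => (a j:ℝ) * τ j) hj₀I).symm
    have hLPT : ∑ j ∈ I, (a j:ℝ) * Pb j = T := by
      rw [← Finset.add_sum_erase I (fun j => (a j:ℝ) * Pb j) hj₀I]
      have h1 : ∀ k ∈ I.erase j₀, (a k:ℝ) * Pb k = (a k:ℝ)*(τ k + s*δ k) := by
        intro k hk
        rw [hPb]; dsimp only
        rw [if_neg (Finset.ne_of_mem_erase hk), if_pos (Finset.mem_of_mem_erase hk)]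
      rw [Finset.sum_congr rfl h1]
      have h2 : Pb j₀ = (T - ∑ k ∈ I.erase j₀, (a k:ℝ)*(τ k + s*δ k))/(a j₀:ℝ) := by
        rw [hPb]; dsimp only; rw [if_pos rfl]
      rw [h2, mul_comm, div_mul_cancel₀ _ (ne_of_gt ha₀)]
      ring
    refine ⟨Pb, ?_, ?_, ?_, ?_⟩
    · intro j hjS
      by_cases hj : j = j₀
      · subst hj
        rw [hPb]; dsimp only; rw [if_pos rfl, lt_div_iff₀ ha₀, herase]
        have hcm : τ j * (a j:ℝ) = (a j:ℝ) * τ j := mul_comm _ _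
        rw [hG] at hG0 hsC
        linarith [hsC, hsplitτ]
      · rw [hPb]; dsimp only; rw [if_neg hj]
        by_cases hjI : j ∈ I
        · rw [if_pos hjI]
          have := mul_pos hs0 (hδpos j)
          linarith
        · rw [if_neg hjI]
          by_cases hc : j ∈ S' ∧ (j ∉ S ∨ τ j < τ' j)
          · rw [if_pos hc]
            rcases hc.2 with h | h
            · exact absurd hjS h
            · exact h
          · rw [if_neg hc]; linarith
    · intro j hjS' hpred
      by_cases hj : j = j₀
      · subst hj
        rcases hpred with h | h
        · exact absurd (hS hj₀I) h
        · linarith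
      · rw [hPb]; dsimp only; rw [if_neg hj]
        by_cases hjI : j ∈ I
        · rw [if_pos hjI]
          have hlt : τ j < τ' j := by
            rcases hpred with h | h
            · exact absurd (hS hjI) h
            · exact h
          have h1 := hδle j hlt
          have h2 : s * δ j ≤ 1 * δ j :=
            mul_le_mul_of_nonneg_right hs1 (le_of_lt (hδpos j))
          linarith
        · rw [if_neg hjI, if_pos ⟨hjS', hpred⟩]
    · rw [hLPT]; exact hσT
    · intro hσσ'
      rw [hLPT, hT, if_pos hσσ']

/-- Setup A: assume `Σ_{k=1}^{n'} a_k/r_k ≥ 1/r_{n+1}`.  If `U(S,t)` is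
not contained in `U(S',t')`, then `F(S,t)` is not contained in `F(S',t')` and the
set difference `F(S,t) ∖ F(S',t')`, with the subspace topology from `ℝⁿ`, is a
contractible topological space. -/
theorem stmt2 (n n' : ℕ) (hn'1 : 1 ≤ n') (hn'n : n' ≤ n)
    (v : Fin n → E n) (hv : LinearIndependent ℝ v)
    (a : Fin n → ℚ) (ha : ∀ i : Fin n, i.val < n' → 0 < a i)
    (r : Fin n → ℤ) (hr : ∀ i, 0 < r i) (rl : ℤ) (hrl : 0 < rl)
    (hsum : (1 : ℚ) / (rl : ℚ) ≤ ∑ k ∈ IprimeA n n', a k / (r k : ℚ))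
    (S S' : Finset (Fin n)) (hS : IprimeA n n' ⊆ S) (hS' : IprimeA n n' ⊆ S')
    (t t' : Fin n → ℤ)
    (hU : ¬ USet n v r S t ⊆ USet n v r S' t') :
    ¬ FSetA n n' a v r rl S t ⊆ FSetA n n' a v r rl S' t' ∧
      ContractibleSpace ↥(FSetA n n' a v r rl S t \ FSetA n n' a v r rl S' t') := by
  classical
  obtain ⟨P, hP1, hP2, hP3, hP4⟩ :=
    exists_P n n' hn'1 hn'n a ha r hr rl hrl hsum S S' hS hS' t t'
  obtain ⟨p, hp⟩ := exists_inner v hv P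
  have hpLast : ⟪p, vLast n n' a v⟫ = ∑ j ∈ IprimeA n n', (a j:ℝ) * P j := by
    rw [vLast, inner_sum]
    refine Finset.sum_congr rfl fun j _ => ?_
    rw [real_inner_smul_right, hp]
  rw [Set.not_subset] at hU
  obtain ⟨x₀, hx₀U, hx₀U'⟩ := hU
  have hx₀U'' : ∃ j ∈ S', ⟪x₀, v j⟫ ≤ (t' j : ℝ) / (r j : ℝ) := by
    simp only [USet, Set.mem_setOf_eq] at hx₀U'
    push_neg at hx₀U'
    exact hx₀U'
  obtain ⟨j₁, hj₁S', hj₁⟩ := hx₀U''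
  have hpred₁ : j₁ ∉ S ∨ (t j₁:ℝ)/(r j₁ : ℝ) < (t' j₁:ℝ)/(r j₁ : ℝ) := by
    by_cases h : j₁ ∈ S
    · exact Or.inr (lt_of_lt_of_le (hx₀U j₁ h) hj₁)
    · exact Or.inl h
  have hPj₁ : P j₁ ≤ (t' j₁:ℝ)/(r j₁ : ℝ) := hP2 j₁ hj₁S' hpred₁
  have hpF : p ∈ FSetA n n' a v r rl S t := by
    refine ⟨fun i hi => ?_, ?_⟩
    · rw [hp i]; exact hP1 i hi
    · rw [hpLast]; exact hP3
  have hpnF' : p ∉ FSetA n n' a v r rl S' t' := by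
    intro hmem
    have := hmem.1 j₁ hj₁S'
    rw [hp j₁] at this
    linarith
  have hne : (FSetA n n' a v r rl S t \ FSetA n n' a v r rl S' t').Nonempty :=
    ⟨p, hpF, hpnF'⟩
  have hstar : StarConvex ℝ p (FSetA n n' a v r rl S t \ FSetA n n' a v r rl S' t') := by
    intro q hq as bs has hbs hab
    obtain ⟨hqF, hqnF'⟩ := hq
    have hinnerc : ∀ w : E n, ⟪as • p + bs • q, w⟫ = as * ⟪p, w⟫ + bs * ⟪q, w⟫ := by
      intro w
      rw [inner_add_left, real_inner_smul_left, real_inner_smul_left]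
    constructor
    · refine ⟨fun i hi => ?_, ?_⟩
      · rw [hinnerc (v i)]
        exact combo_gt (hqF.1 i hi |>.trans_le (le_refl _) |> fun _ => (by rw [hp i]; exact hP1 i hi)) (hqF.1 i hi) hab has hbs
      · rw [hinnerc]
        exact combo_gt (by rw [hpLast]; exact hP3) hqF.2 hab has hbs
    · intro hmem
      by_cases hqU' : q ∈ USet n v r S' t'
      · have hqle : ⟪q, vLast n n' a v⟫ ≤ (tLast n n' a r rl t' : ℝ)/(rl:ℝ) := by
          by_contra hc
          push_neg at hc
          exact hqnF' ⟨hqU', hc⟩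
        have hσσ' : (tLast n n' a r rl t : ℝ)/(rl:ℝ) < (tLast n n' a r rl t' : ℝ)/(rl:ℝ) :=
          lt_of_lt_of_le hqF.2 hqle
        have hple : ⟪p, vLast n n' a v⟫ ≤ (tLast n n' a r rl t' : ℝ)/(rl:ℝ) := by
          rw [hpLast]; exact hP4 hσσ'
        have := hmem.2
        rw [hinnerc] at this
        have hcontra := combo_le hple hqle hab has hbs
        linarith
      · have : ∃ j ∈ S', ⟪q, v j⟫ ≤ (t' j : ℝ) / (r j : ℝ) := by
          simp only [USet, Set.mem_setOf_eq] at hqU'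
          push_neg at hqU'
          exact hqU'
        obtain ⟨j₂, hj₂S', hj₂⟩ := this
        have hpred₂ : j₂ ∉ S ∨ (t j₂:ℝ)/(r j₂ : ℝ) < (t' j₂:ℝ)/(r j₂ : ℝ) := by
          by_cases h : j₂ ∈ S
          · exact Or.inr (lt_of_lt_of_le (hqF.1 j₂ h) hj₂)
          · exact Or.inl h
        have hPj₂ : P j₂ ≤ (t' j₂:ℝ)/(r j₂ : ℝ) := hP2 j₂ hj₂S' hpred₂
        have := hmem.1 j₂ hj₂S'
        rw [hinnerc (v j₂)] at this
        have hple : ⟪p, v j₂⟫ ≤ (t' j₂:ℝ)/(r j₂ : ℝ) := by rw [hp j₂]; exact hPj₂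
        have hcontra := combo_le hple hj₂ hab has hbs
        linarith
  exact ⟨fun hsub => hpnF' (hsub hpF), hstar.contractibleSpace hne⟩
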